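/- Let n ≥ 1 and let F be an upset of a De Morgan lattice L. Then F is a prime n-filter on L if and only if there exists a homomorphism of De Morgan lattices h : L → (Fin n → Bool × Bool) (into DMₙ) such that F = {x : ∃ i, (h x i).1 = true}, i.e., F = h⁻¹(Qₙ). -/

import Mathlib

/-- A De Morgan lattice: a distributive lattice with an antitone involution. -/
class DeMorgan (L : Type*) extends DistribLattice L where
  dneg : L → L
  dneg_dneg : ∀ x : L, dneg (dneg x) = x
  dneg_sup : ∀ x y : L, dneg (x ⊔ y) = dneg x ⊓ dneg y

prefix:max "∼" => DeMorgan.dneg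

section Defs

variable {α : Type*}

/-- An upward closed subset of a lattice. -/
def IsUpset [Lattice α] (F : Set α) : Prop :=
  ∀ ⦃x y : α⦄, x ∈ F → x ≤ y → y ∈ F

/-- A lattice filter: an upset closed under binary meets. -/
def IsLatFilter [Lattice α] (F : Set α) : Prop :=
  IsUpset F ∧ ∀ x y : α, x ∈ F → y ∈ F → x ⊓ y ∈ F

/-- An `n`-filter: an upset such that for every nonempty finite `Y`, if the meet of
every nonempty subset of `Y` of size at most `n` lies in `F`, then so does the meet of `Y`. -/
def IsNFilter [Lattice α] (n : ℕ) (F : Set α) : Prop :=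
  IsUpset F ∧ ∀ (Y : Finset α) (hY : Y.Nonempty),
    (∀ (X : Finset α) (hX : X.Nonempty), X ⊆ Y → X.card ≤ n → X.inf' hX id ∈ F) →
    Y.inf' hY id ∈ F

/-- A prime upset: `x ⊔ y ∈ F` implies `x ∈ F` or `y ∈ F`. -/
def IsPrimeUpset [Lattice α] (F : Set α) : Prop :=
  ∀ x y : α, x ⊔ y ∈ F → x ∈ F ∨ y ∈ F

/-- A downward closed subset of a lattice. -/
def IsDownset [Lattice α] (I : Set α) : Prop :=
  ∀ ⦃x y : α⦄, x ∈ I → y ≤ x → y ∈ I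

/-- A lattice ideal: a downset closed under binary joins. -/
def IsIdeal [Lattice α] (I : Set α) : Prop :=
  IsDownset I ∧ ∀ x y : α, x ∈ I → y ∈ I → x ⊔ y ∈ I

/-- An `n`-ideal: the order dual notion of an `n`-filter. -/
def IsNIdeal [Lattice α] (n : ℕ) (I : Set α) : Prop :=
  IsDownset I ∧ ∀ (Y : Finset α) (hY : Y.Nonempty),
    (∀ (X : Finset α) (hX : X.Nonempty), X ⊆ Y → X.card ≤ n → X.sup' hX id ∈ I) →
    Y.sup' hY id ∈ I

variable {L : Type*} [DeMorgan L]

/-- Almost complete upset: `x ∈ F` implies `x ⊓ (y ⊔ ∼y) ∈ F`. -/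
def AlmostComplete (F : Set L) : Prop := ∀ x ∈ F, ∀ y : L, x ⊓ (y ⊔ ∼y) ∈ F

/-- Complete upset: almost complete and nonempty. -/
def IsCompleteUpset (F : Set L) : Prop := AlmostComplete F ∧ F.Nonempty

/-- Almost consistent upset: `(x ⊓ ∼x) ⊔ y ∈ F` implies `y ∈ F`. -/
def AlmostConsistent (F : Set L) : Prop := ∀ x y : L, (x ⊓ ∼x) ⊔ y ∈ F → y ∈ F

/-- Consistent upset: almost consistent and not total. -/
def IsConsistentUpset (F : Set L) : Prop := AlmostConsistent F ∧ F ≠ Set.univ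

/-- Classical upset: complete and consistent. -/
def IsClassicalUpset (F : Set L) : Prop := IsCompleteUpset F ∧ IsConsistentUpset F

/-- Kalman upset. -/
def IsKalmanUpset (F : Set L) : Prop :=
  ∀ x y z u : L, ((x ⊓ ∼x) ⊓ z) ⊔ u ∈ F → ((y ⊔ ∼y) ⊓ z) ⊔ u ∈ F

/-- A homomorphism of De Morgan lattices. -/
def IsDMHom {L M : Type*} [DeMorgan L] [DeMorgan M] (h : L → M) : Prop :=
  (∀ x y : L, h (x ⊓ y) = h x ⊓ h y) ∧ (∀ x y : L, h (x ⊔ y) = h x ⊔ h y) ∧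
    ∀ x : L, h (∼x) = ∼(h x)

/-- The filter generated by all elements of the form `x ⊔ ∼x`. -/
def Fcomp (L : Type*) [DeMorgan L] : Set L :=
  {a | ∃ (s : Finset L) (hs : s.Nonempty), s.inf' hs (fun x => x ⊔ ∼x) ≤ a}

/-- The `n`-filter generated by a set. -/
def nFilterGen (n : ℕ) (U : Set L) : Set L :=
  ⋂₀ {F : Set L | IsNFilter n F ∧ U ⊆ F}

/-- `Comp U`. -/
def CompCl (U : Set L) : Set L := {x | ∃ a ∈ U, ∃ f ∈ Fcomp L, a ⊓ f ≤ x}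

/-- `Cons U`. -/
def ConsCl (U : Set L) : Set L := {x | ∃ f ∈ Fcomp L, ∼f ⊔ x ∈ U}

/-- A congruence of De Morgan lattices, as a binary relation. -/
def IsCongruence (θ : L → L → Prop) : Prop :=
  Equivalence θ ∧
  (∀ a b c d : L, θ a b → θ c d → θ (a ⊓ c) (b ⊓ d)) ∧
  (∀ a b c d : L, θ a b → θ c d → θ (a ⊔ c) (b ⊔ d)) ∧
  ∀ a b : L, θ a b → θ (∼a) (∼b)

end Defs

/-- The four-element De Morgan lattice `DM₁` on `Bool × Bool`. -/
instance : DeMorgan (Bool × Bool) :=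
  { (inferInstance : DistribLattice (Bool × Bool)) with
    dneg := fun p => (!p.2, !p.1)
    dneg_dneg := by decide
    dneg_sup := by decide }

/-- Powers of `DM₁`, with componentwise operations. -/
instance {ι : Type*} : DeMorgan (ι → Bool × Bool) :=
  { (inferInstance : DistribLattice (ι → Bool × Bool)) with
    dneg := fun f i => ∼(f i)
    dneg_dneg := fun f => funext fun i => DeMorgan.dneg_dneg (f i)
    dneg_sup := fun f g => funext fun i => DeMorgan.dneg_sup (f i) (g i) }


namespace S3aux

lemma bool_inf (a b : Bool) : a ⊓ b = (a && b) := by cases a <;> cases b <;> rfl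

lemma bool_sup (a b : Bool) : a ⊔ b = (a || b) := by cases a <;> cases b <;> rfl

lemma decide_and' (p q : Prop) [Decidable p] [Decidable q] :
    decide (p ∧ q) = decide p ⊓ decide q := by
  rw [bool_inf]
  by_cases hp : p <;> by_cases hq : q <;> simp [hp, hq]

lemma decide_or' (p q : Prop) [Decidable p] [Decidable q] :
    decide (p ∨ q) = decide p ⊔ decide q := by
  rw [bool_sup]
  by_cases hp : p <;> by_cases hq : q <;> simp [hp, hq]

variable {α : Type*} [DistribLattice α]

lemma prime_sup'_not_mem {F : Set α} (hp : IsPrimeUpset F) {β : Type*} {s : Finset β}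
    (hs : s.Nonempty) (f : β → α) :
    (∀ b ∈ s, f b ∉ F) → s.sup' hs f ∉ F := by
  induction hs using Finset.Nonempty.cons_induction with
  | singleton a => intro h; simpa using h a (Finset.mem_singleton_self a)
  | cons a s ha hsne ih =>
    intro h hmem
    rw [Finset.sup'_cons hsne] at hmem
    rcases hp _ _ hmem with h1 | h1
    · exact h a (Finset.mem_cons_self a s) h1
    · exact ih (fun b hb => h b (Finset.mem_cons_of_mem hb)) h1

lemma map_inf'_gen {β : Type*} [SemilatticeInf β] (φ : α → β)
    (hφ : ∀ a b : α, φ (a ⊓ b) = φ a ⊓ φ b) {s : Finset α} (hs : s.Nonempty) :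
    φ (s.inf' hs id) = s.inf' hs φ := by
  induction hs using Finset.Nonempty.cons_induction with
  | singleton a => simp
  | cons a s ha hsne ih => rw [Finset.inf'_cons hsne, Finset.inf'_cons hsne, ← ih, ← hφ]; rfl

lemma sup'_inf_right {β : Type*} {t : Finset β} (ht : t.Nonempty) (f : β → α) (a : α) :
    t.sup' ht f ⊓ a = t.sup' ht (fun b => f b ⊓ a) := by
  induction ht using Finset.Nonempty.cons_induction with
  | singleton b => simp
  | cons b t hb htne ih => rw [Finset.sup'_cons htne, Finset.sup'_cons htne, inf_sup_right, ih]

lemma inf_sup'_left {β : Type*} {t : Finset β} (ht : t.Nonempty) (f : β → α) (a : α) :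
    a ⊓ t.sup' ht f = t.sup' ht (fun b => a ⊓ f b) := by
  induction ht using Finset.Nonempty.cons_induction with
  | singleton b => simp
  | cons b t hb htne ih => rw [Finset.sup'_cons htne, Finset.sup'_cons htne, inf_sup_left, ih]

lemma exists_prime_ext {F H : Set α} (hu : IsUpset F) (hp : IsPrimeUpset F)
    (hH : IsLatFilter H) (hHF : H ⊆ F) :
    ∃ P : Set α, H ⊆ P ∧ P ⊆ F ∧ IsLatFilter P ∧ IsPrimeUpset P := by
  classical
  set S : Set (Set α) := {P | IsLatFilter P ∧ H ⊆ P ∧ P ⊆ F} with hS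
  have hchain : ∀ c ⊆ S, IsChain (fun x1 x2 => x1 ⊆ x2) c → c.Nonempty →
      ∃ ub ∈ S, ∀ s ∈ c, s ⊆ ub := by
    intro c hcS hchain ⟨c0, hc0⟩
    refine ⟨⋃₀ c, ⟨⟨?_, ?_⟩, ?_, ?_⟩, fun s hs => Set.subset_sUnion_of_mem hs⟩
    · intro x y hx hxy
      obtain ⟨t, htc, hxt⟩ := hx
      exact ⟨t, htc, (hcS htc).1.1 hxt hxy⟩
    · intro x y hx hy
      obtain ⟨t, htc, hxt⟩ := hx
      obtain ⟨t', htc', hyt⟩ := hy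
      rcases hchain.total htc htc' with h | h
      · exact ⟨t', htc', (hcS htc').1.2 x y (h hxt) hyt⟩
      · exact ⟨t, htc, (hcS htc).1.2 x y hxt (h hyt)⟩
    · exact (hcS hc0).2.1.trans (Set.subset_sUnion_of_mem hc0)
    · exact Set.sUnion_subset fun t htc => (hcS htc).2.2
  obtain ⟨M, hHM, hMmax⟩ := zorn_subset_nonempty S hchain H ⟨hH, subset_rfl, hHF⟩
  obtain ⟨⟨hMu, hMm⟩, hHM', hMF⟩ := hMmax.prop
  refine ⟨M, hHM, hMF, ⟨hMu, hMm⟩, ?_⟩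
  intro x y hxy
  by_contra hcon
  push_neg at hcon
  obtain ⟨hx, hy⟩ := hcon
  have hext : ∀ z : α, z ∉ M → ∃ p ∈ M, p ⊓ z ∉ F := by
    intro z hz
    set M' : Set α := {w | ∃ p ∈ M, p ⊓ z ≤ w} with hM'
    have hMM' : M ⊆ M' := fun p hp => ⟨p, hp, inf_le_left⟩
    have hzM' : z ∈ M' := ⟨x ⊔ y, hxy, inf_le_right⟩
    by_cases hM'F : M' ⊆ F
    · exfalso
      have hM'S : M' ∈ S := by
        refine ⟨⟨?_, ?_⟩, hHM'.trans hMM', hM'F⟩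
        · rintro u v ⟨p, hp, hpu⟩ huv; exact ⟨p, hp, hpu.trans huv⟩
        · rintro u v ⟨p, hp, hpu⟩ ⟨q, hq, hqv⟩
          exact ⟨p ⊓ q, hMm p q hp hq, by
            calc (p ⊓ q) ⊓ z = (p ⊓ z) ⊓ (q ⊓ z) := by rw [inf_inf_distrib_right]
              _ ≤ u ⊓ v := inf_le_inf hpu hqv⟩
      exact hz (hMmax.2 hM'S hMM' hzM')
    · obtain ⟨w, hwM', hwF⟩ := Set.not_subset.1 hM'F
      obtain ⟨p, hp, hpw⟩ := hwM'
      exact ⟨p, hp, fun hmem => hwF (hu hmem hpw)⟩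
  obtain ⟨p, hpM, hpx⟩ := hext x hx
  obtain ⟨q, hqM, hqy⟩ := hext y hy
  have hmem : (p ⊓ q) ⊓ (x ⊔ y) ∈ F := hMF (hMm _ _ (hMm p q hpM hqM) hxy)
  rw [inf_sup_left] at hmem
  rcases hp _ _ hmem with hc | hc
  · exact hpx (hu hc (inf_le_inf_right x inf_le_left))
  · exact hqy (hu hc (inf_le_inf_right y inf_le_right))

lemma finite_cover {L : Type*} [DistribLattice L] {F : Set L} {n : ℕ} (hn : 1 ≤ n)
    (hu : IsUpset F) (hp : IsPrimeUpset F)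
    (hnf : ∀ (Y : Finset L) (hY : Y.Nonempty),
      (∀ (X : Finset L) (hX : X.Nonempty), X ⊆ Y → X.card ≤ n → X.inf' hX id ∈ F) →
      Y.inf' hY id ∈ F)
    (A : Finset L) (hA : ↑A ⊆ F) :
    ∃ c : L → Fin n, ∀ (B : Finset L) (hB : B.Nonempty), ↑B ⊆ (↑A : Set L) →
      (∀ x ∈ B, ∀ y ∈ B, c x = c y) → B.inf' hB id ∈ F := by
  classical
  rcases A.eq_empty_or_nonempty with rfl | hAne
  · exact ⟨fun _ => ⟨0, hn⟩, fun B hB hBA _ => absurd (hBA hB.choose_spec) (by simp)⟩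
  -- the finite meet-closure of A
  set D : Set L := {x | ∃ (B : Finset L) (hB : B.Nonempty), ↑B ⊆ (↑A : Set L) ∧ x = B.inf' hB id}
    with hD
  have hDfin : D.Finite := by
    have hsub : D ⊆ (fun B : Finset L =>
        if hB : B.Nonempty then B.inf' hB id else A.inf' hAne id) '' ↑A.powerset := by
      rintro x ⟨B, hB, hBA, rfl⟩
      exact ⟨B, by simpa [Finset.mem_powerset] using Finset.coe_subset.1 hBA, by dsimp only; rw [dif_pos hB]⟩
    exact ((A.powerset.finite_toSet).image _).subset hsub
  have hEfin : (D ∩ F).Finite := hDfin.inter_of_left F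
  set E : Finset L := hEfin.toFinset with hE
  have hmemE : ∀ x : L, x ∈ E ↔ x ∈ D ∧ x ∈ F := fun x => by
    rw [hE, Set.Finite.mem_toFinset]; rfl
  have hDinf : ∀ a ∈ D, ∀ b ∈ D, a ⊓ b ∈ D := by
    rintro a ⟨B, hB, hBA, rfl⟩ b ⟨B', hB', hB'A, rfl⟩
    refine ⟨B ∪ B', hB.mono Finset.subset_union_left, ?_, ?_⟩
    · rw [Finset.coe_union]; exact Set.union_subset hBA hB'A
    · rw [Finset.inf'_union hB hB']
  have hAE : ∀ x ∈ A, x ∈ E := by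
    intro x hx
    refine (hmemE x).2 ⟨⟨{x}, Finset.singleton_nonempty x, by simpa using hx, by simp⟩, hA hx⟩
  set Mins : Finset L := E.filter (fun m => ∀ z ∈ E, ¬ z < m) with hM
  have hminE : Mins ⊆ E := Finset.filter_subset _ _
  have hminle : ∀ x ∈ E, ∃ m ∈ Mins, m ≤ x := by
    intro x hx
    obtain ⟨m, hmm⟩ := Finset.exists_minimal (s := E.filter (· ≤ x)) ⟨x, by simp [hx]⟩
    obtain ⟨hm, hmin⟩ : m ∈ E.filter (· ≤ x) ∧ ∀ z ∈ E.filter (· ≤ x), ¬ z < m :=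
      ⟨hmm.1, fun z hz => hmm.not_lt hz⟩
    have hmE : m ∈ E := (Finset.mem_filter.1 hm).1
    have hmx : m ≤ x := (Finset.mem_filter.1 hm).2
    refine ⟨m, Finset.mem_filter.2 ⟨hmE, fun z hz hzm => ?_⟩, hmx⟩
    exact hmin z (Finset.mem_filter.2 ⟨hz, hzm.le.trans hmx⟩) hzm
  have hMinsF : ∀ m ∈ Mins, m ∈ F := fun m hm => ((hmemE m).1 (hminE hm)).2
  have hdist : ∀ m ∈ Mins, ∀ m' ∈ Mins, m ≠ m' → m ⊓ m' ∉ F := by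
    intro m hm m' hm' hne hmem
    have hmmD : m ⊓ m' ∈ D :=
      hDinf m ((hmemE m).1 (hminE hm)).1 m' ((hmemE m').1 (hminE hm')).1
    obtain ⟨m0, hm0, hle⟩ := hminle (m ⊓ m') ((hmemE _).2 ⟨hmmD, hmem⟩)
    have heq : ∀ mm, mm ∈ Mins → m0 ≤ mm → m0 = mm := by
      intro mm hmm hle'
      rcases eq_or_lt_of_le hle' with h | h
      · exact h
      · exact absurd h ((Finset.mem_filter.1 hmm).2 m0 (hminE hm0))
    exact hne ((heq m hm (hle.trans inf_le_left)).symm.trans (heq m' hm' (hle.trans inf_le_right)))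
  -- at most n minimal elements
  have hcard : Mins.card ≤ n := by
    by_contra hgt
    push_neg at hgt
    obtain ⟨t, htM, htc⟩ := Finset.exists_subset_card_eq (s := Mins) (n := n+1) hgt
    set m : Fin (n+1) → L := fun i => ((t.equivFin.symm (Fin.cast htc.symm i)) : L) with hmdef
    have hminj : Function.Injective m := by
      intro i j hij
      have := t.equivFin.symm.injective (Subtype.ext hij)
      simpa [Fin.ext_iff] using congrArg Fin.val this
    have hmMins : ∀ i, m i ∈ Mins := fun i => htM (t.equivFin.symm (Fin.cast htc.symm i)).2
    have hi0 : (0:ℕ) < n+1 := by omega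
    have hi1 : (1:ℕ) < n+1 := by omega
    have hnontriv : ∀ i : Fin (n+1), (Finset.univ.erase i).Nonempty := by
      intro i
      obtain ⟨j, hj⟩ : ∃ j : Fin (n+1), j ≠ i := by
        rcases eq_or_ne i ⟨0, hi0⟩ with rfl | hne
        · exact ⟨⟨1, hi1⟩, by simp [Fin.ext_iff]⟩
        · exact ⟨⟨0, hi0⟩, fun hc => hne hc.symm⟩
      exact ⟨j, Finset.mem_erase.2 ⟨hj, Finset.mem_univ j⟩⟩
    set s : Fin (n+1) → L := fun i => (Finset.univ.erase i).sup' (hnontriv i) m with hsdef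
    set pairs : Finset (Fin (n+1) × Fin (n+1)) := Finset.univ.filter (fun p => p.1 ≠ p.2)
      with hpairs
    have hpairsne : pairs.Nonempty :=
      ⟨(⟨0,hi0⟩,⟨1,hi1⟩), by simp [hpairs, Fin.ext_iff]⟩
    set Q : L := pairs.sup' hpairsne (fun p => m p.1 ⊓ m p.2) with hQdef
    have hQF : Q ∉ F := by
      refine prime_sup'_not_mem hp hpairsne _ (fun p hp' => ?_)
      have hne : p.1 ≠ p.2 := by
        have h' : p ∈ Finset.univ.filter (fun p : Fin (n+1) × Fin (n+1) => p.1 ≠ p.2) := by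
          rw [← hpairs]; exact hp'
        exact (Finset.mem_filter.1 h').2
      exact hdist _ (hmMins p.1) _ (hmMins p.2) (fun hc => hne (hminj hc))
    have hsm : ∀ i, s i ⊓ m i ≤ Q := by
      intro i
      rw [hsdef]
      dsimp only
      rw [sup'_inf_right]
      refine Finset.sup'_le _ _ (fun k hk => ?_)
      refine Finset.le_sup' (α := L) (fun p : Fin (n+1) × Fin (n+1) => m p.1 ⊓ m p.2)
        (b := (k, i)) ?_
      simp [hpairs, (Finset.mem_erase.1 hk).1]
    have claim : ∀ (S : Finset (Fin (n+1))) (hS : S.Nonempty) (hSc : Sᶜ.Nonempty),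
        S.inf' hS s ≤ Q ⊔ Sᶜ.sup' hSc m := by
      intro S hS
      induction hS using Finset.Nonempty.cons_induction with
      | singleton a =>
        intro hSc
        rw [Finset.inf'_singleton, hsdef]
        dsimp only
        refine Finset.sup'_le _ _ (fun j hj => ?_)
        have hjc : j ∈ ({a} : Finset (Fin (n+1)))ᶜ := by
          rw [Finset.mem_compl, Finset.mem_singleton]
          exact (Finset.mem_erase.1 hj).1
        exact (Finset.le_sup' m hjc).trans le_sup_right
      | cons a S ha hSne ih =>
        intro hSc
        have hsub : (Finset.cons a S ha)ᶜ ⊆ Sᶜ :=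
          Finset.compl_subset_compl.2 (Finset.subset_cons ha)
        have hS'c : Sᶜ.Nonempty := hSc.mono hsub
        rw [Finset.inf'_cons hSne]
        have step1 : s a ⊓ S.inf' hSne s ≤ s a ⊓ (Q ⊔ Sᶜ.sup' hS'c m) :=
          inf_le_inf_left _ (ih hS'c)
        rw [inf_sup_left] at step1
        refine step1.trans (sup_le (inf_le_right.trans le_sup_left) ?_)
        rw [inf_sup'_left]
        refine Finset.sup'_le _ _ (fun j hj => ?_)
        rcases eq_or_ne j a with rfl | hja
        · exact (hsm j).trans le_sup_left
        · have hjc : j ∈ (Finset.cons a S ha)ᶜ := by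
            rw [Finset.mem_compl, Finset.mem_cons]
            push_neg
            exact ⟨hja, Finset.mem_compl.1 hj⟩
          exact (inf_le_right.trans (Finset.le_sup' m hjc)).trans le_sup_right
    have hufin : (Finset.univ : Finset (Fin (n+1))).Nonempty := ⟨⟨0,hi0⟩, Finset.mem_univ _⟩
    have hQle : Finset.univ.inf' hufin s ≤ Q := by
      set i0 : Fin (n+1) := ⟨0, hi0⟩ with hi0def
      have h1 : Finset.univ.inf' hufin s ≤ s i0 := Finset.inf'_le _ (Finset.mem_univ _)
      have h2 : Finset.univ.inf' hufin s ≤ (Finset.univ.erase i0).inf' (hnontriv i0) s :=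
        Finset.le_inf' _ _ (fun b _ => Finset.inf'_le _ (Finset.mem_univ b))
      have hcompl : ((Finset.univ.erase i0)ᶜ : Finset (Fin (n+1))) = {i0} := by
        rw [Finset.compl_erase, Finset.compl_univ]; rfl
      have hcne : ((Finset.univ.erase i0)ᶜ : Finset (Fin (n+1))).Nonempty := by
        rw [hcompl]; exact Finset.singleton_nonempty _
      have h3 := claim _ (hnontriv i0) hcne
      have h4 : ((Finset.univ.erase i0)ᶜ).sup' hcne m = m i0 := by
        rw [Finset.sup'_congr hcne hcompl (fun x _ => rfl), Finset.sup'_singleton]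
      rw [h4] at h3
      have h5 : Finset.univ.inf' hufin s ≤ s i0 ⊓ (Q ⊔ m i0) :=
        le_inf h1 (h2.trans h3)
      rw [inf_sup_left] at h5
      exact h5.trans (sup_le inf_le_right (hsm i0))
    set Y : Finset L := Finset.image s Finset.univ with hY
    have hYne : Y.Nonempty := hufin.image s
    have hYinf : Y.inf' hYne id = Finset.univ.inf' hufin s :=
      (Finset.inf'_image hYne id).trans rfl
    have hnotF : Y.inf' hYne id ∉ F := fun hmem => hQF (hu (by rwa [hYinf] at hmem) hQle)
    apply hnotF
    apply hnf Y hYne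
    intro X hX hXY hXcard
    have hch : ∀ x ∈ X, ∃ i : Fin (n+1), s i = x := by
      intro x hx
      obtain ⟨i, _, hi⟩ := Finset.mem_image.1 (hXY hx)
      exact ⟨i, hi⟩
    set T : Finset (Fin (n+1)) := X.attach.image (fun z => (hch z.1 z.2).choose) with hT
    have hTcard : T.card ≤ n := by
      calc T.card ≤ X.attach.card := Finset.card_image_le
        _ = X.card := Finset.card_attach
        _ ≤ n := hXcard
    obtain ⟨k, hk⟩ : ∃ k : Fin (n+1), k ∉ T := by
      by_contra hcon
      push_neg at hcon
      have hsub : (Finset.univ : Finset (Fin (n+1))) ⊆ T := fun k _ => hcon k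
      have := Finset.card_le_card hsub
      rw [Finset.card_univ, Fintype.card_fin] at this
      omega
    have hkx : ∀ x ∈ X, m k ≤ x := by
      intro x hx
      have hspec := (hch x hx).choose_spec
      have hne : k ≠ (hch x hx).choose := by
        intro hc
        exact hk (hc ▸ Finset.mem_image.2 ⟨⟨x, hx⟩, Finset.mem_attach _ _, rfl⟩)
      calc m k ≤ s ((hch x hx).choose) := by
            show m k ≤ (Finset.univ.erase ((hch x hx).choose)).sup' (hnontriv _) m
            exact Finset.le_sup' m (Finset.mem_erase.2 ⟨hne, Finset.mem_univ _⟩)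
        _ = x := hspec
    exact hu (hMinsF (m k) (hmMins k)) (Finset.le_inf' hX id (fun b hb => hkx b hb))
  -- build the coloring from the ≤ n minimal elements
  have hMne : Mins.Nonempty := by
    obtain ⟨a, ha⟩ := hAne
    obtain ⟨m, hm, _⟩ := hminle a (hAE a ha)
    exact ⟨m, hm⟩
  obtain ⟨m0, hm0⟩ := hMne
  set l := Mins.toList with hl
  have hlen : l.length ≤ n := by rw [hl, Finset.length_toList]; exact hcard
  set w : Fin n → L := fun i => l.getD i m0 with hw
  have hwMins : ∀ i, w i ∈ Mins := by
    intro i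
    rw [hw]; dsimp only
    by_cases h : (i : ℕ) < l.length
    · rw [List.getD_eq_getElem l m0 h]
      exact Finset.mem_toList.1 (List.getElem_mem h)
    · rw [List.getD_eq_default l m0 (le_of_not_gt h)]
      exact hm0
  have hwcover : ∀ x ∈ E, ∃ i : Fin n, w i ≤ x := by
    intro x hx
    obtain ⟨mm, hmm, hmmle⟩ := hminle x hx
    obtain ⟨j, hj, hjeq⟩ := List.mem_iff_getElem.1 (Finset.mem_toList.2 hmm)
    refine ⟨⟨j, lt_of_lt_of_le hj hlen⟩, ?_⟩
    rw [hw]; dsimp only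
    rw [List.getD_eq_getElem l m0 (by exact hj), hjeq]
    exact hmmle
  refine ⟨fun x => if h : ∃ i : Fin n, w i ≤ x then h.choose else ⟨0, hn⟩, ?_⟩
  intro B hB hBA hmono
  obtain ⟨b0, hb0⟩ := hB
  have hkey : ∀ x ∈ B,
      w (if h : ∃ i : Fin n, w i ≤ x then h.choose else ⟨0,hn⟩) ≤ x := by
    intro x hx
    have hex : ∃ i : Fin n, w i ≤ x := hwcover x (hAE x (hBA hx))
    rw [dif_pos hex]
    exact hex.choose_spec
  have hc0 : ∀ x ∈ B,
      w (if h : ∃ i : Fin n, w i ≤ b0 then h.choose else ⟨0,hn⟩) ≤ x := by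
    intro x hx
    have hthis := hkey x hx
    have h' : (if h : ∃ i : Fin n, w i ≤ x then h.choose else (⟨0,hn⟩ : Fin n)) =
        (if h : ∃ i : Fin n, w i ≤ b0 then h.choose else ⟨0,hn⟩) := hmono x hx b0 hb0
    rwa [h'] at hthis
  exact hu (hMinsF _ (hwMins _)) (Finset.le_inf' ⟨b0, hb0⟩ id (fun x hx => hc0 x hx))

end S3aux


/-- prime `n`-filters on a De Morgan lattice are precisely the preimages of
the designated set `Qₙ` of `DMₙ` under De Morgan homomorphisms. -/
theorem statement3 {L : Type*} [DeMorgan L] [Nonempty L] (n : ℕ) (hn : 1 ≤ n)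
    (F : Set L) (hF : IsUpset F) :
    (IsPrimeUpset F ∧ IsNFilter n F) ↔
      ∃ h : L → (Fin n → Bool × Bool), IsDMHom h ∧
        F = {x : L | ∃ i : Fin n, (h x i).1 = true} := by
  classical
  constructor
  · rintro ⟨hPrime, hNF⟩
    have hcfun : ∀ A : Finset L, ∃ c : L → Fin n, (↑A ⊆ F →
        ∀ (B : Finset L) (hB : B.Nonempty), ↑B ⊆ (↑A : Set L) →
        (∀ x ∈ B, ∀ y ∈ B, c x = c y) → B.inf' hB id ∈ F) := by
      intro A
      by_cases hAF : ↑A ⊆ F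
      · obtain ⟨c, hc⟩ := S3aux.finite_cover hn hF hPrime hNF.2 A hAF
        exact ⟨c, fun _ => hc⟩
      · exact ⟨fun _ => ⟨0, hn⟩, fun hcon => absurd hcon hAF⟩
    choose cfun hcfun using hcfun
    haveI : Nonempty {G : Finset L // ↑G ⊆ F} := ⟨⟨∅, by simp⟩⟩
    set SS : {G : Finset L // ↑G ⊆ F} → Set (Finset L) :=
      fun G => {A | G.1 ⊆ A ∧ ↑A ⊆ F} with hSS
    set f : Filter (Finset L) := ⨅ G, Filter.principal (SS G) with hf
    haveI hfne : f.NeBot := by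
      apply Filter.iInf_neBot_of_directed
      · intro G G'
        refine ⟨⟨G.1 ∪ G'.1, by rw [Finset.coe_union]; exact Set.union_subset G.2 G'.2⟩, ?_, ?_⟩
        · refine Filter.principal_mono.2 ?_
          rintro A ⟨hsub, hAF⟩
          exact ⟨Finset.subset_union_left.trans hsub, hAF⟩
        · refine Filter.principal_mono.2 ?_
          rintro A ⟨hsub, hAF⟩
          exact ⟨Finset.subset_union_right.trans hsub, hAF⟩
      · intro G
        rw [Filter.principal_neBot_iff]
        exact ⟨G.1, subset_rfl, G.2⟩
    set U : Ultrafilter (Finset L) := Ultrafilter.of f with hU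
    have hUS : ∀ G, SS G ∈ U := fun G =>
      Ultrafilter.of_le f (Filter.mem_iInf_of_mem G (Filter.mem_principal_self _))
    set T : Fin n → L → Set (Finset L) :=
      fun i x => {A | x ∈ A ∧ ↑A ⊆ F ∧ cfun A x = i} with hT
    set G : Fin n → Set L := fun i => {x | T i x ∈ U} with hG
    have hcover : ∀ x ∈ F, ∃ i, x ∈ G i := by
      intro x hx
      have h1 : SS ⟨{x}, by simpa using hx⟩ ∈ U := hUS _
      have h2 : SS ⟨{x}, by simpa using hx⟩ ⊆ ⋃ i ∈ (Set.univ : Set (Fin n)), T i x := by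
        rintro A ⟨hxA, hAF⟩
        exact Set.mem_biUnion (Set.mem_univ (cfun A x))
          ⟨Finset.singleton_subset_iff.1 hxA, hAF, rfl⟩
      have h3 : (⋃ i ∈ (Set.univ : Set (Fin n)), T i x) ∈ U :=
        Filter.mem_of_superset h1 h2
      obtain ⟨i, _, hi⟩ := (Ultrafilter.finite_biUnion_mem_iff Set.finite_univ).1 h3
      exact ⟨i, hi⟩
    have hblock : ∀ (i : Fin n) (s : Finset L) (hs : s.Nonempty),
        ↑s ⊆ G i → s.inf' hs id ∈ F := by
      intro i s hs hsub
      have hmem : (⋂ x ∈ (↑s : Set L), T i x) ∈ U :=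
        (Filter.biInter_mem s.finite_toSet).2 (fun x hx => hsub hx)
      obtain ⟨A, hA⟩ := Ultrafilter.nonempty_of_mem hmem
      rw [Set.mem_iInter₂] at hA
      have hs' := hs
      obtain ⟨x0, hx0⟩ := hs'
      have hAF : ↑A ⊆ F := (hA x0 hx0).2.1
      refine hcfun A hAF s hs ?_ ?_
      · intro x hx
        exact (hA x hx).1
      · intro x hx y hy
        rw [(hA x hx).2.2, (hA y hy).2.2]
    set H : Fin n → Set L := fun i =>
      {y | ∃ (s : Finset L) (hs : s.Nonempty), ↑s ⊆ G i ∧ s.inf' hs id ≤ y} with hH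
    have hHfil : ∀ i, IsLatFilter (H i) := by
      intro i
      constructor
      · rintro x y ⟨s, hs, hsG, hle⟩ hxy
        exact ⟨s, hs, hsG, hle.trans hxy⟩
      · rintro x y ⟨s, hs, hsG, hle⟩ ⟨s', hs', hs'G, hle'⟩
        refine ⟨s ∪ s', hs.mono Finset.subset_union_left, ?_, ?_⟩
        · rw [Finset.coe_union]; exact Set.union_subset hsG hs'G
        · rw [Finset.inf'_union hs hs']; exact inf_le_inf hle hle'
    have hHF : ∀ i, H i ⊆ F := by
      rintro i y ⟨s, hs, hsG, hle⟩
      exact hF (hblock i s hs hsG) hle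
    have hGH : ∀ i, G i ⊆ H i := by
      intro i x hx
      exact ⟨{x}, Finset.singleton_nonempty x, by simpa using hx, by simp⟩
    have hPex : ∀ i : Fin n, ∃ P : Set L, H i ⊆ P ∧ P ⊆ F ∧ IsLatFilter P ∧ IsPrimeUpset P :=
      fun i => S3aux.exists_prime_ext hF hPrime (hHfil i) (hHF i)
    choose P hHP hPF hPfil hPpr using hPex
    have hup : ∀ i, IsUpset (P i) := fun i => (hPfil i).1
    have hmm : ∀ (i : Fin n) (x y : L), x ⊓ y ∈ P i ↔ x ∈ P i ∧ y ∈ P i := fun i x y =>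
      ⟨fun hxy => ⟨hup i hxy inf_le_left, hup i hxy inf_le_right⟩,
       fun hxy => (hPfil i).2 x y hxy.1 hxy.2⟩
    have hss : ∀ (i : Fin n) (x y : L), x ⊔ y ∈ P i ↔ x ∈ P i ∨ y ∈ P i := fun i x y =>
      ⟨hPpr i x y, fun hxy =>
        hxy.elim (fun hc => hup i hc le_sup_left) (fun hc => hup i hc le_sup_right)⟩
    have hdneg_inf : ∀ x y : L, ∼(x ⊓ y) = ∼x ⊔ ∼y := by
      intro x y
      have h1 : ∼(∼x ⊔ ∼y) = ∼∼x ⊓ ∼∼y := DeMorgan.dneg_sup _ _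
      rw [DeMorgan.dneg_dneg, DeMorgan.dneg_dneg] at h1
      rw [← h1, DeMorgan.dneg_dneg]
    refine ⟨fun x i => (decide (x ∈ P i), decide (∼x ∉ P i)), ⟨?_, ?_, ?_⟩, ?_⟩
    · intro x y
      funext i
      have c1 : (x ⊓ y ∈ P i) ↔ (x ∈ P i ∧ y ∈ P i) := hmm i x y
      have c2 : (∼(x ⊓ y) ∉ P i) ↔ (∼x ∉ P i ∧ ∼y ∉ P i) := by
        rw [hdneg_inf, hss]; exact not_or
      refine Prod.ext ?_ ?_
      · show decide (x ⊓ y ∈ P i) = decide (x ∈ P i) ⊓ decide (y ∈ P i)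
        rw [decide_eq_decide.2 c1, S3aux.decide_and']
      · show decide (∼(x ⊓ y) ∉ P i) = decide (∼x ∉ P i) ⊓ decide (∼y ∉ P i)
        rw [decide_eq_decide.2 c2, S3aux.decide_and']
    · intro x y
      funext i
      have c1 : (x ⊔ y ∈ P i) ↔ (x ∈ P i ∨ y ∈ P i) := hss i x y
      have c2 : (∼(x ⊔ y) ∉ P i) ↔ (∼x ∉ P i ∨ ∼y ∉ P i) := by
        rw [DeMorgan.dneg_sup, hmm]; exact not_and_or
      refine Prod.ext ?_ ?_
      · show decide (x ⊔ y ∈ P i) = decide (x ∈ P i) ⊔ decide (y ∈ P i)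
        rw [decide_eq_decide.2 c1, S3aux.decide_or']
      · show decide (∼(x ⊔ y) ∉ P i) = decide (∼x ∉ P i) ⊔ decide (∼y ∉ P i)
        rw [decide_eq_decide.2 c2, S3aux.decide_or']
    · intro x
      funext i
      refine Prod.ext ?_ ?_
      · show decide (∼x ∈ P i) = !decide (∼x ∉ P i)
        rw [decide_not, Bool.not_not]
      · show decide (∼∼x ∉ P i) = !decide (x ∈ P i)
        rw [DeMorgan.dneg_dneg, decide_not]
    · ext x
      simp only [Set.mem_setOf_eq]
      constructor
      · intro hx
        obtain ⟨i, hGi⟩ := hcover x hx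
        refine ⟨i, ?_⟩
        show decide (x ∈ P i) = true
        rw [decide_eq_true_eq]
        exact hHP i (hGH i hGi)
      · rintro ⟨i, hi⟩
        have hi' : decide (x ∈ P i) = true := hi
        rw [decide_eq_true_eq] at hi'
        exact hPF i hi'
  · rintro ⟨h, ⟨hmeet, hsup, hneg⟩, hFeq⟩
    haveI : Nonempty (Fin n) := ⟨⟨0, hn⟩⟩
    constructor
    · intro x y hxy
      rw [hFeq] at hxy
      obtain ⟨i, hi⟩ := hxy
      rw [hsup] at hi
      have hi0 : (h x i).1 ⊔ (h y i).1 = true := hi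
      rw [S3aux.bool_sup] at hi0
      rcases Bool.or_eq_true_iff.1 hi0 with hcase | hcase
      · left; rw [hFeq]; exact ⟨i, hcase⟩
      · right; rw [hFeq]; exact ⟨i, hcase⟩
    · refine ⟨hF, ?_⟩
      intro Y hY hyp
      by_contra hni
      rw [hFeq] at hni
      simp only [Set.mem_setOf_eq, not_exists] at hni
      have hfalse : ∀ i : Fin n, Y.inf' hY (fun y => (h y i).1) = false := by
        intro i
        have hq : (h (Y.inf' hY id) i).1 = Y.inf' hY (fun y => (h y i).1) := by
          refine S3aux.map_inf'_gen (φ := fun y => (h y i).1) ?_ hY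
          intro a b
          rw [hmeet]
          rfl
        have hne := hni i
        rw [hq] at hne
        exact Bool.eq_false_iff.2 hne
      have hchoice : ∀ i : Fin n, ∃ y ∈ Y, (h y i).1 = false := by
        intro i
        obtain ⟨y, hyY, hyeq⟩ := Finset.exists_mem_eq_inf' hY (fun y => (h y i).1)
        exact ⟨y, hyY, by rw [← hyeq]; exact hfalse i⟩
      choose t ht1 ht2 using hchoice
      set X : Finset L := Finset.image t Finset.univ with hX
      have hXne : X.Nonempty := Finset.univ_nonempty.image t
      have hXsub : X ⊆ Y := by
        intro z hz
        obtain ⟨i, _, rfl⟩ := Finset.mem_image.1 hz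
        exact ht1 i
      have hXcard : X.card ≤ n := by
        calc X.card ≤ Finset.univ.card := Finset.card_image_le
          _ = n := by rw [Finset.card_univ, Fintype.card_fin]
      have hXF := hyp X hXne hXsub hXcard
      rw [hFeq] at hXF
      obtain ⟨j, hj⟩ := hXF
      have hle : X.inf' hXne id ≤ t j :=
        Finset.inf'_le id (Finset.mem_image.2 ⟨j, Finset.mem_univ _, rfl⟩)
      have hmono : h (X.inf' hXne id) ≤ h (t j) := by
        have heq : h (X.inf' hXne id) ⊓ h (t j) = h (X.inf' hXne id) := by
          rw [← hmeet, inf_eq_left.2 hle]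
        exact inf_eq_left.1 heq
      have hb : (h (X.inf' hXne id) j).1 ≤ (h (t j) j).1 := (Prod.le_def.1 (hmono j)).1
      rw [hj, ht2 j] at hb
      exact absurd hb (by decide)
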